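/- Let 𝒞 be a ℂ-linear subspace of the functions D → ℂ invariant under complex conjugation. If 𝒞 is complex conjugate phase retrieval, then Re(𝒞) is phase retrieval, i.e. for all g, h ∈ Re(𝒞), if |h(x)| = |g(x)| for all x ∈ D then h = g or h = −g. -/

import Mathlib

open Complex

/-- **Corollary 2.6.**  Let `C` be a ℂ-linear subspace of functions `D → ℂ` invariant
under complex conjugation.  If `C` is complex conjugate phase retrieval, then the real
linear space `Re(C) = {(w + conj w)/2 : w ∈ C}` of real-valued functions in `C` is
phase retrieval. -/
theorem stmt_5 {D : Type*} [Nonempty D] (C : Submodule ℂ (D → ℂ))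
    (hconj : ∀ f ∈ C, (fun x => (starRingEnd ℂ) (f x)) ∈ C)
    (hpr : ∀ f ∈ C,
      {g : D → ℂ | g ∈ C ∧ ∀ x, ‖g x‖ = ‖f x‖} =
        {g : D → ℂ | ∃ z : ℂ, ‖z‖ = 1 ∧ g = fun x => z * f x} ∪
        {g : D → ℂ | ∃ z : ℂ, ‖z‖ = 1 ∧ g = fun x => z * (starRingEnd ℂ) (f x)}) :
    ∀ g ∈ {g : D → ℝ | ∃ w ∈ C, ∀ x, (g x : ℂ) = (w x + (starRingEnd ℂ) (w x)) / 2},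
      ∀ h ∈ {g : D → ℝ | ∃ w ∈ C, ∀ x, (g x : ℂ) = (w x + (starRingEnd ℂ) (w x)) / 2},
        (∀ x, |h x| = |g x|) → h = g ∨ h = -g := by
  rintro g ⟨wg, hwg, hg⟩ h ⟨wh, hwh, hh⟩ habs
  have hgC : (fun x => (g x : ℂ)) ∈ C := by
    have he : (fun x => (g x : ℂ)) = (1/2 : ℂ) • (wg + fun x => (starRingEnd ℂ) (wg x)) := by
      funext x
      simp only [Pi.smul_apply, Pi.add_apply, smul_eq_mul, hg x]
      ring
    rw [he]
    exact C.smul_mem _ (C.add_mem hwg (hconj _ hwg))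
  have hhC : (fun x => (h x : ℂ)) ∈ C := by
    have he : (fun x => (h x : ℂ)) = (1/2 : ℂ) • (wh + fun x => (starRingEnd ℂ) (wh x)) := by
      funext x
      simp only [Pi.smul_apply, Pi.add_apply, smul_eq_mul, hh x]
      ring
    rw [he]
    exact C.smul_mem _ (C.add_mem hwh (hconj _ hwh))
  have hmem : (fun x => (h x : ℂ)) ∈
      {g' : D → ℂ | g' ∈ C ∧ ∀ x, ‖g' x‖ = ‖(g x : ℂ)‖} := by
    refine ⟨hhC, fun x => ?_⟩
    simp [Complex.norm_real, habs x]
  rw [hpr _ hgC] at hmem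
  obtain ⟨z, hz1, hz2⟩ : ∃ z : ℂ, ‖z‖ = 1 ∧ ∀ x, (h x : ℂ) = z * g x := by
    rcases hmem with ⟨z, hz, he⟩ | ⟨z, hz, he⟩
    · exact ⟨z, hz, fun x => congrFun he x⟩
    · refine ⟨z, hz, fun x => ?_⟩
      have := congrFun he x
      simpa [abs_div] using this
  by_cases hg0 : ∀ x, g x = 0
  · left
    funext x
    have h1 := hz2 x
    rw [hg0 x] at h1
    have h2 : (h x : ℂ) = 0 := by simpa using h1
    have h3 : h x = 0 := by exact_mod_cast h2
    simp [h3, hg0 x]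
  · push_neg at hg0
    obtain ⟨x0, hx0⟩ := hg0
    have hgx0 : (g x0 : ℂ) ≠ 0 := by exact_mod_cast hx0
    have hzr : z = ((h x0 / g x0 : ℝ) : ℂ) := by
      push_cast
      field_simp
      linear_combination (hz2 x0).symm
    have habs1 : |h x0 / g x0| = 1 := by
      have := hz1
      rw [hzr] at this
      simpa [abs_div] using this
    have hpt : ∀ x, h x = (h x0 / g x0) * g x := by
      intro x
      have h1 := hz2 x
      rw [hzr] at h1
      exact_mod_cast h1
    rcases abs_eq (by norm_num : (0:ℝ) ≤ 1) |>.mp habs1 with hr | hr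
    · left; funext x; rw [hpt x, hr, one_mul]
    · right; funext x; rw [hpt x, hr]; simp
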